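/- arXiv:2204.09618 — 2 statements merged into one kernel-verified Lean document; each statement's English description precedes it below -/
import Mathlib

section
/- Let L > 0 and μ > 0, and let β₁(μ) ∈ (0, π) be the smallest positive root of cot(β) = (β² − μ²L²)/(2Lβμ). Then β₁(μ) → π as μ → ∞; consequently the first Robin eigenvalue λ(μ) = β₁(μ)²/L² converges to the first Dirichlet eigenvalue π²/L² as μ → ∞. -/
open Real Filter

/-- If β₁(μ) ∈ (0, π) is the smallest positive root of cot β = (β² - μ²L²)/(2Lβμ), then
β₁(μ) → π as μ → ∞, and hence the first Robin eigenvalue λ(μ) = β₁(μ)²/L² converges to the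
first Dirichlet eigenvalue π²/L². -/
theorem first_robin_root_tendsto_pi (L : ℝ) (hL : 0 < L) (β : ℝ → ℝ)
    (hβ : ∀ μ : ℝ, 0 < μ →
      IsLeast {b : ℝ | 0 < b ∧
        Real.cos b / Real.sin b = (b^2 - μ^2 * L^2) / (2 * L * b * μ)} (β μ) ∧ β μ < π) :
    Tendsto β atTop (nhds π) ∧
    Tendsto (fun μ => (β μ)^2 / L^2) atTop (nhds (π^2 / L^2)) := by
  have hπ := Real.pi_pos
  have hmain : Tendsto β atTop (nhds π) := by
    rw [Metric.tendsto_atTop]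
    intro ε hε
    set δ := min ε (π/2) with hδdef
    have hδ0 : 0 < δ := lt_min hε (by positivity)
    have hδle : δ ≤ π/2 := min_le_right _ _
    have hδε : δ ≤ ε := min_le_left _ _
    set s := Real.sin δ with hsdef
    have hs : 0 < s := Real.sin_pos_of_pos_of_lt_pi hδ0 (by linarith)
    have hs1 : s ≤ 1 := Real.sin_le_one δ
    refine ⟨max 1 ((π^2 + 2*L*π/s)/L^2 + 1), fun μ hμ => ?_⟩
    have hμ1 : 1 ≤ μ := le_trans (le_max_left _ _) hμ
    have hμ0 : 0 < μ := by linarith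
    obtain ⟨⟨⟨hb0, heq⟩, -⟩, hbπ⟩ := hβ μ hμ0
    set b := β μ with hbdef
    have hN2 : (π^2 + 2*L*π/s)/L^2 + 1 ≤ μ := le_trans (le_max_right _ _) hμ
    have hμL : π^2 + 2*L*π/s + L^2 ≤ μ * L^2 := by
      have h := mul_le_mul_of_nonneg_right hN2 (le_of_lt (by positivity : (0:ℝ) < L^2))
      have he : ((π^2 + 2*L*π/s)/L^2 + 1) * L^2 = π^2 + 2*L*π/s + L^2 := by
        field_simp
      linarith [he ▸ h]
    have hkey : π - δ < b := by
      by_contra h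
      push_neg at h
      have hsb : 0 < Real.sin b := Real.sin_pos_of_pos_of_lt_pi hb0 (by linarith)
      -- lower bound on cot b
      have hlb : -(1/s) ≤ Real.cos b / Real.sin b := by
        rcases le_or_gt 0 (Real.cos b) with hc | hc
        · have h1 : 0 ≤ Real.cos b / Real.sin b := div_nonneg hc hsb.le
          have h2 : 0 < 1/s := by positivity
          linarith
        · have hb2 : π/2 ≤ b := by
            by_contra h2
            push_neg at h2
            exact absurd (Real.cos_nonneg_of_mem_Icc ⟨by linarith, h2.le⟩) (not_le.mpr hc)
          have hsb' : s ≤ Real.sin b := by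
            rw [← Real.sin_pi_sub b]
            exact Real.strictMonoOn_sin.monotoneOn ⟨by linarith, hδle⟩
              ⟨by linarith, by linarith⟩ (by linarith)
          have h1 : -(1/s) ≤ -(1/Real.sin b) := by
            rw [neg_le_neg_iff]
            exact one_div_le_one_div_of_le hs hsb'
          have h2 : -(1/Real.sin b) ≤ Real.cos b / Real.sin b := by
            rw [show -(1/Real.sin b) = (-1)/Real.sin b by ring]
            exact (div_le_div_iff_of_pos_right hsb).mpr (Real.neg_one_le_cos b)
          linarith
      -- upper bound on the RHS
      have hub : (b^2 - μ^2 * L^2) / (2 * L * b * μ) < -(1/s) := by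
        rw [div_lt_iff₀ (by positivity)]
        have hmul := mul_le_mul_of_nonneg_left hμL hμ0.le
        have hbig : 0 ≤ (1/s) * (2*L*μ) * (π - b) := by
          have : (0:ℝ) ≤ π - b := by linarith
          positivity
        have hss : (1/s) * s = 1 := one_div_mul_cancel (ne_of_gt hs)
        have hds : 2*L*π/s = 2*L*π*(1/s) := by ring
        rw [hds] at hmul
        nlinarith [hmul, hbig, hb0, hbπ, hμ1, hL, hπ, sq_nonneg (μ - 1),
          mul_pos hμ0 (mul_pos hL hπ)]
      rw [heq] at hlb
      linarith
    have hδb : dist b π < ε := by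
      rw [Real.dist_eq, abs_of_neg (by linarith : b - π < 0)]
      linarith
    exact hδb
  exact ⟨hmain, (hmain.pow 2).div_const _⟩
end

section
/- Let L > 0 and μ > 0, and let β₁ ∈ (0,π) be the smallest positive root of cot(β) = (β² − μ²L²)/(2Lβμ). Writing β₁ = π − δ, one has δ = 2π/(μL) + O(μ^{-2}) as μ → ∞; in particular π − β₁ ≤ C/μ for a constant C depending only on L and all sufficiently large μ. -/
open Real Filter Asymptotics

private lemma cot_antitone {a b : ℝ} (ha : 0 < a) (hab : a ≤ b) (hb : b < π) :
    Real.cos b / Real.sin b ≤ Real.cos a / Real.sin a := by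
  have h1 : Real.tan (π/2 - b) = Real.cos b / Real.sin b := by
    rw [Real.tan_eq_sin_div_cos, Real.sin_pi_div_two_sub, Real.cos_pi_div_two_sub]
  have h2 : Real.tan (π/2 - a) = Real.cos a / Real.sin a := by
    rw [Real.tan_eq_sin_div_cos, Real.sin_pi_div_two_sub, Real.cos_pi_div_two_sub]
  rw [← h1, ← h2]
  exact Real.strictMonoOn_tan.monotoneOn ⟨by linarith, by linarith⟩
    ⟨by linarith, by linarith⟩ (by linarith)

private lemma Hmono {m t t' : ℝ} (hm : 0 < m) (ht : 0 < t) (htt' : t ≤ t') :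
    (m^2 - t'^2)/(2*m*t') ≤ (m^2 - t^2)/(2*m*t) := by
  have ht' : 0 < t' := ht.trans_le htt'
  rw [div_le_div_iff₀ (by positivity) (by positivity)]
  nlinarith [mul_nonneg hm.le (mul_nonneg (sub_nonneg.2 htt')
    (by positivity : (0:ℝ) ≤ m^2 + t*t'))]

private lemma Hsplit {m t : ℝ} (hm : m ≠ 0) (ht : t ≠ 0) :
    (m^2 - t^2)/(2*m*t) = m/(2*t) - t/(2*m) := by
  field_simp

set_option maxHeartbeats 1000000 in
/-- Asymptotics of the smallest positive root β₁(μ) ∈ (0,π) of cot β = (β² - μ²L²)/(2Lβμ):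
writing β₁ = π - δ one has δ = 2π/(μL) + O(μ⁻²) as μ → ∞; in particular π - β₁ ≤ C/μ for
a constant C and all sufficiently large μ. -/
theorem first_robin_root_asymptotics (L : ℝ) (hL : 0 < L) (β : ℝ → ℝ)
    (hβ : ∀ μ : ℝ, 0 < μ →
      IsLeast {b : ℝ | 0 < b ∧
        Real.cos b / Real.sin b = (b^2 - μ^2 * L^2) / (2 * L * b * μ)} (β μ) ∧ β μ < π) :
    (fun μ : ℝ => (π - β μ) - 2 * π / (μ * L)) =O[atTop] (fun μ : ℝ => 1 / μ^2) ∧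
    ∃ C > 0, ∀ᶠ μ : ℝ in atTop, π - β μ ≤ C / μ := by
  have hπ3 : (3:ℝ) < π := Real.pi_gt_three
  have hπ4 : π < 4 := Real.pi_lt_d2.trans (by norm_num)
  have key : ∀ᶠ μ : ℝ in atTop,
      |(π - β μ) - 2 * π / (μ * L)| ≤ 4*π^2/L^2 * (1/μ^2) := by
    filter_upwards [eventually_ge_atTop (8*π/L), eventually_gt_atTop 0] with μ hμ8 hμ0
    set m := μ * L with hmdef
    clear_value m
    have hm8 : 8*π ≤ m := by rw [hmdef]; exact (div_le_iff₀ hL).mp hμ8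
    have hm0 : (0:ℝ) < m := by linarith [Real.pi_pos]
    obtain ⟨⟨⟨hb0, heq⟩, _⟩, hbπ⟩ := hβ μ hμ0
    set b := β μ with hbdef
    clear_value b
    set δ : ℝ := π - b with hδdef
    clear_value δ
    have hδ0 : 0 < δ := by rw [hδdef]; linarith
    have hδπ : δ < π := by rw [hδdef]; linarith
    have hsδ : 0 < Real.sin δ := Real.sin_pos_of_pos_of_lt_pi hδ0 hδπ
    -- the transformed equation: cot δ = (m² - b²)/(2 m b), with b = π - δ
    have heq' : Real.cos δ / Real.sin δ = (m^2 - b^2)/(2*m*b) := by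
      have h1 : Real.cos δ = -Real.cos b := by rw [hδdef, Real.cos_pi_sub]
      have h2 : Real.sin δ = Real.sin b := by rw [hδdef, Real.sin_pi_sub]
      rw [h1, h2, neg_div, heq, hmdef]
      field_simp
      ring
    have hbδ : b = π - δ := by rw [hδdef]; ring
    -- endpoints
    set δm : ℝ := 2*π/m - 4*π^2/m^2 with hδm_def
    clear_value δm
    set δp : ℝ := 2*π/m + 4*π^2/m^2 with hδp_def
    clear_value δp
    have h2πm : 2*π/m ≤ 1/4 := by
      rw [div_le_iff₀ hm0]; nlinarith
    have h4m : 4*π^2/m^2 ≤ 1/16 := by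
      rw [div_le_iff₀ (by positivity)]; nlinarith [sq_nonneg (m - 8*π), Real.pi_pos]
    have hδm0 : 0 < δm := by
      rw [hδm_def, sub_pos, div_lt_div_iff₀ (by positivity) hm0]
      nlinarith [mul_pos (mul_pos Real.pi_pos hm0) (by linarith [Real.pi_pos] : (0:ℝ) < m - 2*π)]
    have hδp0 : 0 < δp := by rw [hδp_def]; positivity
    have hδp_half : δp < π/2 := by rw [hδp_def]; linarith
    have hδmp : δm < δp := by
      rw [hδm_def, hδp_def]
      have : (0:ℝ) < 4*π^2/m^2 := by positivity
      linarith
    have hδm_half : δm < π/2 := hδmp.trans hδp_half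
    -- Step A : cot δp < H δp
    have hA1 : Real.cos δp / Real.sin δp ≤ 1/δp := by
      have htan : δp < Real.tan δp := Real.lt_tan hδp0 hδp_half
      have h1 : Real.cos δp / Real.sin δp = 1 / Real.tan δp := by
        rw [Real.tan_eq_sin_div_cos, one_div_div]
      rw [h1]
      exact one_div_le_one_div_of_le hδp0 htan.le
    have hA3 : 1/δp ≤ m/(2*π) - 1/2 := by
      rw [div_le_iff₀ hδp0]
      have hexp : (m/(2*π) - 1/2)*δp = 1 + π/m - 2*π^2/m^2 := by
        rw [hδp_def]; field_simp; ring
      have h5 : 2*π^2/m^2 ≤ π/m := by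
        rw [div_le_div_iff₀ (by positivity) hm0]
        nlinarith [mul_pos (mul_pos Real.pi_pos hm0) (by linarith [Real.pi_pos] : (0:ℝ) < m - 2*π)]
      linarith
    have hA2 : m/(2*π) - π/(2*m) ≤ (m^2 - (π - δp)^2)/(2*m*(π - δp)) := by
      have hπδp : 0 < π - δp := by linarith
      rw [Hsplit hm0.ne' hπδp.ne']
      have e1 : m/(2*π) ≤ m/(2*(π - δp)) := by
        rw [div_le_div_iff₀ (by positivity) (by linarith)]
        nlinarith [mul_nonneg hm0.le hδp0.le]
      have e2 : (π - δp)/(2*m) ≤ π/(2*m) := by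
        gcongr
        linarith
      linarith
    have hπ2m : π/(2*m) < 1/2 := by
      rw [div_lt_iff₀ (by positivity)]; nlinarith
    have hA : Real.cos δp / Real.sin δp < (m^2 - (π - δp)^2)/(2*m*(π - δp)) := by
      linarith
    -- Step B : cot δm > H δm
    have hδm_le : δm ≤ 2*π/m := by
      rw [hδm_def]
      have : (0:ℝ) ≤ 4*π^2/m^2 := by positivity
      linarith
    have hB1 : (1 - δm^2/2)/δm ≤ Real.cos δm / Real.sin δm := by
      have hsm : 0 < Real.sin δm := Real.sin_pos_of_pos_of_lt_pi hδm0 (by linarith)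
      apply div_le_div₀ (Real.cos_nonneg_of_mem_Icc ⟨by linarith, by linarith⟩)
        (Real.one_sub_sq_div_two_le_cos) hsm (Real.sin_le hδm0.le)
    have hB3 : m/(2*(π - δm)) < (1 - δm^2/2)/δm := by
      have hπδm : 0 < π - δm := by linarith
      rw [div_lt_div_iff₀ (by linarith) hδm0]
      have hms : m * δm = 2*π - 4*π^2/m := by
        rw [hδm_def]; field_simp
      have hsq : δm^2 ≤ (2*π/m)^2 := by
        apply pow_le_pow_left₀ hδm0.le hδm_le
      have hsq' : (2*π/m)^2 = 4*π^2/m^2 := by rw [div_pow]; ring_nf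
      have h2 : π*δm^2 ≤ 4*π^3/m^2 := by
        rw [hsq'] at hsq
        calc π*δm^2 ≤ π*(4*π^2/m^2) := by
              exact mul_le_mul_of_nonneg_left hsq Real.pi_pos.le
          _ = 4*π^3/m^2 := by ring
      have h3 : 4*π/m + 4*π^3/m^2 < 4*π^2/m := by
        have : 4*π/m + 4*π^3/m^2 = (4*π*m + 4*π^3)/m^2 := by field_simp
        rw [this, div_lt_div_iff₀ (by positivity) hm0]
        have hcore : 0 < π*m - m - π^2 := by
          nlinarith [mul_nonneg (by linarith : (0:ℝ) ≤ π - 1) (by linarith : (0:ℝ) ≤ m - 8*π),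
            mul_pos Real.pi_pos (by linarith : (0:ℝ) < 7*π - 8)]
        nlinarith [mul_pos (mul_pos (by positivity : (0:ℝ) < 4*π) hm0) hcore]
      have h1 : 2*δm ≤ 4*π/m := by
        rw [show (4:ℝ)*π/m = 2*(2*π/m) by ring]; linarith
      have hRHS : (1 - δm^2/2)*(2*(π - δm)) = 2*π - 2*δm - π*δm^2 + δm^3 := by ring
      have hcube : 0 < δm^3 := pow_pos hδm0 3
      linarith
    have hB2 : (m^2 - (π - δm)^2)/(2*m*(π - δm)) ≤ m/(2*(π - δm)) := by
      have hπδm : 0 < π - δm := by linarith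
      rw [Hsplit hm0.ne' hπδm.ne']
      have : 0 ≤ (π - δm)/(2*m) := div_nonneg (by linarith) (by linarith)
      linarith
    have hB : (m^2 - (π - δm)^2)/(2*m*(π - δm)) < Real.cos δm / Real.sin δm := by
      linarith
    -- comparisons
    have hup : δ < δp := by
      by_contra hc
      push_neg at hc  -- δp ≤ δ
      have c1 : Real.cos δ / Real.sin δ ≤ Real.cos δp / Real.sin δp :=
        cot_antitone hδp0 hc hδπ
      have c2 : (m^2 - (π - δp)^2)/(2*m*(π - δp)) ≤ (m^2 - (π - δ)^2)/(2*m*(π - δ)) := by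
        apply Hmono hm0 (by linarith) (by linarith)
      rw [heq', hbδ] at c1
      linarith
    have hdown : δm < δ := by
      by_contra hc
      push_neg at hc  -- δ ≤ δm
      have c1 : Real.cos δm / Real.sin δm ≤ Real.cos δ / Real.sin δ :=
        cot_antitone hδ0 hc (by linarith)
      have c2 : (m^2 - (π - δ)^2)/(2*m*(π - δ)) ≤ (m^2 - (π - δm)^2)/(2*m*(π - δm)) := by
        apply Hmono hm0 (by linarith) (by linarith)
      rw [heq', hbδ] at c1
      linarith
    -- conclude
    have habs : |δ - 2*π/m| ≤ 4*π^2/m^2 := by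
      rw [abs_le]
      constructor <;> [linarith [hdown]; linarith [hup]]
    have hconv : 4*π^2/m^2 = 4*π^2/L^2 * (1/μ^2) := by
      rw [hmdef]
      field_simp
    linarith [habs, hconv.le, hconv.ge]
  constructor
  · rw [isBigO_iff]
    refine ⟨4*π^2/L^2, ?_⟩
    filter_upwards [key, eventually_gt_atTop 0] with μ hk hμ0
    rw [Real.norm_eq_abs, Real.norm_eq_abs, abs_of_nonneg (by positivity : (0:ℝ) ≤ 1/μ^2)]
    exact hk
  · refine ⟨2*π/L + 4*π^2/L^2, by positivity, ?_⟩
    filter_upwards [key, eventually_ge_atTop 1] with μ hk hμ1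
    have hμ0 : (0:ℝ) < μ := by linarith
    have h1 := (abs_le.mp hk).2
    have h2 : 1/μ^2 ≤ 1/μ := by
      rw [div_le_div_iff₀ (by positivity) hμ0]
      nlinarith
    have h3 : 4*π^2/L^2 * (1/μ^2) ≤ 4*π^2/L^2 * (1/μ) :=
      mul_le_mul_of_nonneg_left h2 (by positivity)
    have h4 : 2*π/(μ*L) = (2*π/L)/μ := by
      rw [div_div]; ring_nf
    have h5 : (2*π/L)/μ + (4*π^2/L^2)/μ = (2*π/L + 4*π^2/L^2)/μ := by
      rw [← add_div]
    have h6 : 4*π^2/L^2 * (1/μ) = (4*π^2/L^2)/μ := by rw [mul_one_div]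
    linarith
end
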